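/- Let n be a positive integer, let D be a set of divisors of n with gcd of D together with n equal to 1, and let t be the size of the smallest subset {d_1,...,d_t} ⊆ D whose elements together with n have gcd 1 (i.e., the smallest set of additive generators of Z_n contained in D). Let G = G(n;S) be the integral circulant graph with S = ⋃_{d∈D} G_n(d). Then t ≤ diam(G) ≤ 2t + 1. -/

import Mathlib

/-- `Gn n d = {k : 1 ≤ k ≤ n-1, gcd(k,n) = d}`. -/
def Gn (n d : ℕ) : Finset ℕ := (Finset.Ioo 0 n).filter fun k => Nat.gcd k n = d


private lemma coprime_helper' {a m : ℕ} (hm : 0 < m)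
    (h : ∀ p : ℕ, p.Prime → p ∣ m → ¬ p ∣ a) : Nat.Coprime a m := by
  by_contra hne
  have hgpos : 0 < Nat.gcd a m := Nat.gcd_pos_of_pos_right a hm
  have hp := Nat.minFac_prime (n := Nat.gcd a m) (by unfold Nat.Coprime at hne; omega)
  have hdg : (Nat.gcd a m).minFac ∣ Nat.gcd a m := Nat.minFac_dvd _
  exact h _ hp (hdg.trans (Nat.gcd_dvd_right a m)) (hdg.trans (Nat.gcd_dvd_left a m))

private lemma exists_two_units' (m : ℕ) (hm : 0 < m) (w : ZMod m) :
    ∃ u v : ZMod m, IsUnit u ∧ IsUnit v ∧ u + v = 2 * w := by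
  haveI : NeZero m := ⟨hm.ne'⟩
  set c := (2 * w).val with hc
  have hcmod : c ≡ 2 * w.val [MOD m] := by
    have h2w : (2 * w : ZMod m) = ((2 * w.val : ℕ) : ZMod m) := by
      push_cast [ZMod.natCast_val, ZMod.cast_id]
      ring
    rw [hc, h2w, ZMod.val_natCast]
    exact Nat.mod_modEq _ m
  set m1 := Nat.gcd m (c ^ m) with hm1
  have hm1d : m1 ∣ m := Nat.gcd_dvd_left _ _
  have hm1pos : 0 < m1 := Nat.gcd_pos_of_pos_left _ hm
  set m2 := m / m1 with hm2
  have hm12 : m1 * m2 = m := Nat.mul_div_cancel' hm1d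
  have hm2pos : 0 < m2 := Nat.div_pos (Nat.le_of_dvd hm hm1d) hm1pos
  have F1 : ∀ p : ℕ, p.Prime → p ∣ m1 → p ∣ c := fun p pp hp =>
    pp.dvd_of_dvd_pow (hp.trans (Nat.gcd_dvd_right _ _))
  have F2 : ∀ p : ℕ, p.Prime → p ∣ m2 → ¬ p ∣ c := by
    intro p pp hp2 hpc
    rcases eq_or_ne c 0 with hc0 | hc0
    · have hm1m : m1 = m := by
        rw [hm1, hc0, zero_pow hm.ne', Nat.gcd_zero_right]
      rw [hm2, hm1m, Nat.div_self hm] at hp2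
      exact absurd (Nat.dvd_one.mp hp2) pp.one_lt.ne'
    · have hcm : c ^ m ≠ 0 := pow_ne_zero _ hc0
      have hkey : m1.factorization p = m.factorization p := by
        rw [hm1, Nat.factorization_gcd hm.ne' hcm]
        simp only [Finsupp.inf_apply, Nat.factorization_pow, Finsupp.smul_apply,
          smul_eq_mul]
        have h1 : 1 ≤ c.factorization p := pp.factorization_pos_of_dvd hc0 hpc
        have h2 : m.factorization p < m := Nat.factorization_lt p hm.ne'
        exact min_eq_left (by nlinarith)
      have hsplit : m.factorization p = m1.factorization p + m2.factorization p := by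
        rw [← hm12, Nat.factorization_mul hm1pos.ne' hm2pos.ne']
        simp
      have h2pos : 1 ≤ m2.factorization p := pp.factorization_pos_of_dvd hm2pos.ne' hp2
      omega
  have co : Nat.Coprime m1 m2 := coprime_helper' hm2pos
    (fun p pp hpm2 hpm1 => F2 p pp hpm2 (F1 p pp hpm1))
  obtain ⟨k, hk1, hk2⟩ := Nat.chineseRemainder co 1 w.val
  refine ⟨(k : ZMod m), 2 * w - (k : ZMod m), ?_, ?_, by ring⟩
  · rw [ZMod.isUnit_iff_coprime]
    refine coprime_helper' hm ?_
    intro p pp hpm hpk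
    rcases (pp.dvd_mul.mp (hm12 ▸ hpm)) with hp1 | hp2
    · have : k ≡ 1 [MOD p] := hk1.of_dvd hp1
      have : (0 : ℕ) ≡ 1 [MOD p] := (Nat.modEq_zero_iff_dvd.mpr hpk).symm.trans this
      exact absurd (Nat.dvd_one.mp (Nat.modEq_zero_iff_dvd.mp this.symm)) pp.one_lt.ne'
    · have hkw : k ≡ w.val [MOD p] := hk2.of_dvd hp2
      have hpw : p ∣ w.val := (Nat.modEq_zero_iff_dvd.mp
        ((hkw.symm.trans (Nat.modEq_zero_iff_dvd.mpr hpk))))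
      have hpc : p ∣ c := (Nat.modEq_zero_iff_dvd.mp
        (((hcmod.of_dvd (hp2.trans ⟨m1, by rw [← hm12]; ring⟩)).trans
          (Nat.modEq_zero_iff_dvd.mpr (hpw.mul_left 2)))))
      exact F2 p pp hp2 hpc
  · set v := 2 * w - (k : ZMod m) with hv
    have hvcast : ((v.val : ℕ) : ZMod m) = v := by rw [ZMod.natCast_val, ZMod.cast_id]
    rw [← hvcast, ZMod.isUnit_iff_coprime]
    refine coprime_helper' hm ?_
    intro p pp hpm hpk
    have hpm' : (p : ℕ) ∣ m := hpm
    -- work in ZMod p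
    have hcast0 : ((v.val : ℕ) : ZMod p) = 0 := (ZMod.natCast_eq_zero_iff _ _).mpr hpk
    have hπv : ((v.val : ℕ) : ZMod p) = 2 * ((w.val : ℕ) : ZMod p) - ((k : ℕ) : ZMod p) := by
      have : ((v.val : ℕ) : ZMod p) = (ZMod.castHom hpm' (ZMod p)) v := by
        rw [ZMod.castHom_apply, ← ZMod.natCast_val]
      rw [this, hv]
      rw [map_sub, map_mul, map_ofNat, map_natCast]
      congr 1
      rw [ZMod.castHom_apply, ← ZMod.natCast_val]
    rcases (pp.dvd_mul.mp (hm12 ▸ hpm')) with hp1 | hp2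
    · -- k ≡ 1, 2w ≡ c ≡ 0 mod p
      have hk1p : ((k : ℕ) : ZMod p) = 1 := by
        have := (ZMod.natCast_eq_natCast_iff _ _ _).mpr (hk1.of_dvd hp1)
        simpa using this
      have hcp : ((c : ℕ) : ZMod p) = 0 :=
        (ZMod.natCast_eq_zero_iff _ _).mpr (F1 p pp hp1)
      have h2wp : 2 * ((w.val : ℕ) : ZMod p) = 0 := by
        have := (ZMod.natCast_eq_natCast_iff _ _ _).mpr (hcmod.of_dvd (hp1.trans hm1d))
        push_cast at this
        rw [← this, hcp]
      rw [hcast0, h2wp, hk1p] at hπv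
      haveI hf : Fact p.Prime := ⟨pp⟩
      have h10 : (1 : ZMod p) = 0 := by linear_combination hπv
      exact one_ne_zero h10
    · -- k ≡ w.val mod p, so v ≡ w, and p ∤ c forbids p ∣ w.val
      have hkw : ((k : ℕ) : ZMod p) = ((w.val : ℕ) : ZMod p) :=
        (ZMod.natCast_eq_natCast_iff _ _ _).mpr (hk2.of_dvd hp2)
      rw [hcast0, hkw] at hπv
      have hwp : ((w.val : ℕ) : ZMod p) = 0 := by linear_combination -hπv
      have hpw : p ∣ w.val := (ZMod.natCast_eq_zero_iff _ _).mp hwp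
      have hpc : p ∣ c := (Nat.modEq_zero_iff_dvd.mp
        ((hcmod.of_dvd (hp2.trans ⟨m1, by rw [← hm12]; ring⟩)).trans
          (Nat.modEq_zero_iff_dvd.mpr (hpw.mul_left 2))))
      exact F2 p pp hp2 hpc



private lemma cast_mul_mod' {n : ℕ} (d m : ℕ) (hdm : d * m = n) (a : ℕ) :
    ((d * (a % m) : ℕ) : ZMod n) = ((d * a : ℕ) : ZMod n) := by
  have h1 : d * (a % m) + d * m * (a / m) = d * a := by
    rw [mul_assoc, ← Nat.mul_add, Nat.mod_add_div]
  have h0 : ((d * m : ℕ) : ZMod n) = 0 := by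
    rw [hdm]; exact ZMod.natCast_self n
  calc ((d * (a % m) : ℕ) : ZMod n)
      = ((d * (a % m) : ℕ) : ZMod n) + ((d * m : ℕ) : ZMod n) * ((a / m : ℕ) : ZMod n) := by
        rw [h0, zero_mul, add_zero]
    _ = ((d * (a % m) + d * m * (a / m) : ℕ) : ZMod n) := by push_cast; ring
    _ = ((d * a : ℕ) : ZMod n) := by rw [h1]


private lemma step_pair' (n d : ℕ) [NeZero n] (hd : d ∣ n) (hlt : d < n) (c : ZMod n) :
    ∃ s1 s2 : ℕ, s1 ∈ Gn n d ∧ s2 ∈ Gn n d ∧ ((s1 : ZMod n) + (s2 : ZMod n) = 2 * c * d) := by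
  have hn : 0 < n := Nat.pos_of_ne_zero (NeZero.ne n)
  have hd0 : 0 < d := by
    rcases Nat.eq_zero_or_pos d with h | h
    · subst h; exact absurd (zero_dvd_iff.mp hd) (NeZero.ne n)
    · exact h
  set m := n / d with hmdef
  have hdm : d * m = n := Nat.mul_div_cancel' hd
  have hm2 : 2 ≤ m := by
    rcases Nat.lt_or_ge m 2 with h | h
    · interval_cases m <;> omega
    · exact h
  haveI : NeZero m := ⟨by omega⟩
  haveI hfm : Fact (1 < m) := ⟨by omega⟩
  obtain ⟨u, v, hu, hv, huv⟩ := exists_two_units' m (by omega) ((c.val : ZMod m))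
  have mem : ∀ z : ZMod m, IsUnit z → d * z.val ∈ Gn n d := by
    intro z hz
    have hz0 : z.val ≠ 0 := by
      intro h0
      exact hz.ne_zero ((ZMod.val_eq_zero z).mp h0)
    have hco : Nat.Coprime z.val m := by
      rw [← ZMod.isUnit_iff_coprime]
      rwa [ZMod.natCast_val, ZMod.cast_id]
    simp only [Gn, Finset.mem_filter, Finset.mem_Ioo]
    refine ⟨⟨by positivity, ?_⟩, ?_⟩
    · calc d * z.val < d * m := by
            exact (Nat.mul_lt_mul_left hd0).mpr (ZMod.val_lt z)
        _ = n := hdm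
    · rw [← hdm, Nat.gcd_mul_left, hco, mul_one]
  refine ⟨d * u.val, d * v.val, mem u hu, mem v hv, ?_⟩
  have hval : (u + v).val = (u.val + v.val) % m := ZMod.val_add u v
  have h2c : (2 * ((c.val : ℕ) : ZMod m)) = (((2 * c.val : ℕ) : ZMod m)) := by push_cast; ring
  calc ((d * u.val : ℕ) : ZMod n) + ((d * v.val : ℕ) : ZMod n)
      = ((d * (u.val + v.val) : ℕ) : ZMod n) := by push_cast; ring
    _ = ((d * ((u.val + v.val) % m) : ℕ) : ZMod n) := (cast_mul_mod' d m hdm _).symm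
    _ = ((d * ((u + v).val) : ℕ) : ZMod n) := by rw [hval]
    _ = ((d * ((2 * c.val) % m) : ℕ) : ZMod n) := by rw [huv, h2c, ZMod.val_natCast]
    _ = ((d * (2 * c.val) : ℕ) : ZMod n) := cast_mul_mod' d m hdm _
    _ = 2 * c * d := by
        push_cast [ZMod.natCast_val, ZMod.cast_id]
        ring


private lemma gcd_combination' (n : ℕ) (E : Finset ℕ) :
    ∃ c : ℕ → ZMod n, ((E.gcd id : ℕ) : ZMod n) = ∑ d ∈ E, c d * (d : ZMod n) := by
  classical
  induction E using Finset.induction with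
  | empty => exact ⟨0, by simp⟩
  | @insert a E2 ha ih =>
    
    obtain ⟨c, hc⟩ := ih
    set g' := E2.gcd id with hg'
    have hins : (insert a E2).gcd id = Nat.gcd a g' := by
      rw [Finset.gcd_insert]; rfl
    have hbez : ((Nat.gcd a g' : ℤ) : ZMod n)
        = ((a : ℤ) : ZMod n) * ((Nat.gcdA a g' : ℤ) : ZMod n)
          + ((g' : ℤ) : ZMod n) * ((Nat.gcdB a g' : ℤ) : ZMod n) := by
      rw [← Int.cast_mul, ← Int.cast_mul, ← Int.cast_add, ← Nat.gcd_eq_gcd_ab]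
    refine ⟨fun d => if d = a then ((Nat.gcdA a g' : ℤ) : ZMod n)
      else ((Nat.gcdB a g' : ℤ) : ZMod n) * c d, ?_⟩
    rw [Finset.sum_insert ha, hins]
    have hsum : ∑ d ∈ E2, (if d = a then ((Nat.gcdA a g' : ℤ) : ZMod n)
        else ((Nat.gcdB a g' : ℤ) : ZMod n) * c d) * (d : ZMod n)
        = ((Nat.gcdB a g' : ℤ) : ZMod n) * ∑ d ∈ E2, c d * (d : ZMod n) := by
      rw [Finset.mul_sum]
      refine Finset.sum_congr rfl ?_
      intro d hd
      rw [if_neg (by rintro rfl; exact ha hd)]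
      ring
    have hbeta : (fun d => if d = a then ((Nat.gcdA a g' : ℤ) : ZMod n)
        else ((Nat.gcdB a g' : ℤ) : ZMod n) * c d) a = ((Nat.gcdA a g' : ℤ) : ZMod n) := by
      simp
    rw [hsum, hbeta, ← hc]
    push_cast at hbez ⊢
    rw [hbez]; ring

private lemma steps_list' (n : ℕ) (S : Finset ℕ) (E : Finset ℕ) (f : ℕ → ZMod n)
    (h : ∀ d ∈ E, ∃ s1 s2 : ℕ, s1 ∈ S ∧ s2 ∈ S ∧ ((s1 : ZMod n) + (s2 : ZMod n) = f d)) :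
    ∃ L : List ℕ, (∀ s ∈ L, s ∈ S) ∧ L.length = 2 * E.card ∧
      ((L.map (Nat.cast : ℕ → ZMod n)).sum = ∑ d ∈ E, f d) := by
  classical
  induction E using Finset.induction with
  | empty => exact ⟨[], by simp⟩
  | @insert a E2 ha ih =>
    
    obtain ⟨s1, s2, hs1, hs2, hsum⟩ := h a (Finset.mem_insert_self a E2)
    obtain ⟨L, hL, hlen, hLsum⟩ := ih (fun d hd => h d (Finset.mem_insert_of_mem hd))
    refine ⟨s1 :: s2 :: L, ?_, ?_, ?_⟩
    · intro s hs
      simp only [List.mem_cons] at hs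
      rcases hs with rfl | rfl | h
      · exact hs1
      · exact hs2
      · exact hL s h
    · simp only [List.length_cons, hlen, Finset.card_insert_of_notMem ha]; ring
    · rw [Finset.sum_insert ha]
      simp only [List.map_cons, List.sum_cons, ← hsum, hLsum]
      ring


private lemma walk_of_steps' {n : ℕ} [NeZero n] {S : Finset ℕ} {G : SimpleGraph (ZMod n)}
    (hG : ∀ u v : ZMod n, G.Adj u v ↔ (u - v).val ∈ S)
    (hSlt : ∀ s ∈ S, s < n) :
    ∀ (L : List ℕ), (∀ s ∈ L, s ∈ S) → ∀ v : ZMod n,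
      ∃ W : G.Walk (v + (L.map (Nat.cast : ℕ → ZMod n)).sum) v, W.length = L.length := by
  intro L
  induction L with
  | nil =>
    intro _ v
    exact ⟨SimpleGraph.Walk.nil.copy (by simp) rfl, by simp⟩
  | cons s L ih =>
    intro h v
    have hs : s ∈ S := h s List.mem_cons_self
    set r := (L.map (Nat.cast : ℕ → ZMod n)).sum with hr
    obtain ⟨W, hW⟩ := ih (fun x hx => h x (List.mem_cons_of_mem s hx)) v
    have adj : G.Adj (v + r + (s : ZMod n)) (v + r) := by
      rw [hG]
      have heq : (v + r + (s : ZMod n)) - (v + r) = (s : ZMod n) := by ring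
      rw [heq, ZMod.val_natCast, Nat.mod_eq_of_lt (hSlt s hs)]
      exact hs
    refine ⟨(SimpleGraph.Walk.cons adj W).copy (by simp [hr]; ring) rfl, ?_⟩
    simp [hW]

private lemma steps_of_walk' {n : ℕ} [NeZero n] {S : Finset ℕ} {G : SimpleGraph (ZMod n)}
    (hG : ∀ u v : ZMod n, G.Adj u v ↔ (u - v).val ∈ S) :
    ∀ {u v : ZMod n} (W : G.Walk u v), ∃ L : List ℕ, (∀ s ∈ L, s ∈ S) ∧
      L.length = W.length ∧ u = v + (L.map (Nat.cast : ℕ → ZMod n)).sum := by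
  intro u v W
  induction W with
  | nil => exact ⟨[], by simp, by simp, by simp⟩
  | @cons a b w adj p ih =>
    obtain ⟨L, hL, hlen, hsum⟩ := ih
    refine ⟨(a - b).val :: L, ?_, by simp [hlen], ?_⟩
    · intro s hs
      simp only [List.mem_cons] at hs
      rcases hs with rfl | hs
      · exact (hG a b).mp adj
      · exact hL s hs
    · simp only [List.map_cons, List.sum_cons]
      rw [ZMod.natCast_val, ZMod.cast_id]
      rw [hsum] at *
      ring

/-- Let `D` be a set of divisors of `n` with
`gcd(D ∪ {n}) = 1`, and let `t` be the size of the smallest subset of `D`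
that (together with `n`) has gcd `1`, i.e. of the smallest set of additive
generators of `ℤ_n` contained in `D`. Then the integral circulant graph
`G = G(n;S)` with `S = ⋃_{d ∈ D} G_n(d)` satisfies `t ≤ diam G ≤ 2t + 1`. -/
theorem stmt_12 (n : ℕ) [NeZero n] (D : Finset ℕ)
    (hDdvd : ∀ d ∈ D, d ∣ n)
    (hDgen : Nat.gcd (D.gcd id) n = 1)
    (t : ℕ)
    (ht : IsLeast {c : ℕ | ∃ E : Finset ℕ, E ⊆ D ∧ E.card = c ∧ Nat.gcd (E.gcd id) n = 1} t)
    (S : Finset ℕ) (hS : S = D.biUnion (Gn n))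
    (G : SimpleGraph (ZMod n))
    (hG : ∀ u v : ZMod n, G.Adj u v ↔ (u - v).val ∈ S) :
    t ≤ G.diam ∧ G.diam ≤ 2 * t + 1 := by
  classical
  have hn : 0 < n := Nat.pos_of_ne_zero (NeZero.ne n)
  have hSlt : ∀ s ∈ S, s < n := by
    intro s hs
    rw [hS, Finset.mem_biUnion] at hs
    obtain ⟨d, _, hsd⟩ := hs
    simp only [Gn, Finset.mem_filter, Finset.mem_Ioo] at hsd
    exact hsd.1.2
  have hSgcd : ∀ s ∈ S, Nat.gcd s n ∈ D := by
    intro s hs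
    rw [hS, Finset.mem_biUnion] at hs
    obtain ⟨d, hd, hsd⟩ := hs
    simp only [Gn, Finset.mem_filter, Finset.mem_Ioo] at hsd
    rw [hsd.2]; exact hd
  obtain ⟨E, hED, hEcard, hEgcd⟩ := ht.1
  -- every element of E is a proper divisor
  have hElt : ∀ d ∈ E, d < n := by
    intro d hd
    have hdvd : d ∣ n := hDdvd d (hED hd)
    rcases lt_or_eq_of_le (Nat.le_of_dvd hn hdvd) with h | h
    · exact h
    · exfalso
      subst h
      set g' := (E.erase d).gcd id with hg'
      have hgcdeq : E.gcd id = Nat.gcd d g' := by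
        conv_lhs => rw [← Finset.insert_erase hd]
        rw [Finset.gcd_insert]
        rfl
      have hg'1 : Nat.gcd g' d = 1 := by
        refine Nat.dvd_one.mp ?_
        rw [← hEgcd, hgcdeq]
        exact Nat.dvd_gcd (Nat.dvd_gcd (Nat.gcd_dvd_right g' d) (Nat.gcd_dvd_left g' d))
          (Nat.gcd_dvd_right g' d)
      have hle := ht.2 ⟨E.erase d, (Finset.erase_subset d E).trans hED, rfl, hg'1⟩
      rw [Finset.card_erase_of_mem hd, hEcard] at hle
      have hpos : 0 < t := hEcard ▸ Finset.card_pos.mpr ⟨d, hd⟩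
      omega
  have hGnS : ∀ d ∈ E, ∀ s ∈ Gn n d, s ∈ S := by
    intro d hd s hs
    rw [hS, Finset.mem_biUnion]
    exact ⟨d, hED hd, hs⟩
  -- even targets need 2t steps
  have heven : ∀ x : ZMod n, ∃ L : List ℕ, (∀ s ∈ L, s ∈ S) ∧ L.length = 2 * t ∧
      ((L.map (Nat.cast : ℕ → ZMod n)).sum = 2 * x) := by
    intro y
    set g := E.gcd id with hg
    obtain ⟨c0, hc0⟩ := gcd_combination' n E
    set A : ZMod n := ((Nat.gcdA g n : ℤ) : ZMod n) with hA
    have hbez := Nat.gcd_eq_gcd_ab g n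
    rw [hEgcd] at hbez
    have h1 : (1 : ZMod n) = (g : ZMod n) * A := by
      have h2 := congrArg (fun z : ℤ => (z : ZMod n)) hbez
      push_cast at h2
      rw [ZMod.natCast_self, zero_mul, add_zero] at h2
      exact h2
    obtain ⟨L, hL, hlen, hsum⟩ := steps_list' n S E (fun d => 2 * (y * A * c0 d) * d)
      (fun d hd => by
        obtain ⟨s1, s2, h1, h2, h3⟩ :=
          step_pair' n d (hDdvd d (hED hd)) (hElt d hd) (y * A * c0 d)
        exact ⟨s1, s2, hGnS d hd s1 h1, hGnS d hd s2 h2, h3⟩)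
    refine ⟨L, hL, by rw [hlen, hEcard], ?_⟩
    rw [hsum]
    have : ∑ d ∈ E, 2 * (y * A * c0 d) * (d : ZMod n)
        = 2 * y * (A * ∑ d ∈ E, c0 d * (d : ZMod n)) := by
      rw [Finset.mul_sum, Finset.mul_sum]
      exact Finset.sum_congr rfl fun d _ => by ring
    rw [this, ← hc0, ← hg]
    calc 2 * y * (A * (g : ZMod n)) = 2 * y * ((g : ZMod n) * A) := by ring
      _ = 2 * y * 1 := by rw [← h1]
      _ = 2 * y := by ring
  -- representation of arbitrary targets
  have hrep : ∀ x : ZMod n, ∃ L : List ℕ, (∀ s ∈ L, s ∈ S) ∧ L.length ≤ 2 * t + 1 ∧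
      ((L.map (Nat.cast : ℕ → ZMod n)).sum = x) := by
    intro x
    have hhalf : ∀ x' : ZMod n, Even x'.val ∨ Odd n → ∃ y : ZMod n, 2 * y = x' := by
      intro x' h
      have hev : Even (x'.val) ∨ Even (x'.val + n) := by
        rcases Nat.even_or_odd x'.val with he | ho
        · exact Or.inl he
        · rcases h with he | hodd
          · exact Or.inl he
          · exact Or.inr (Odd.add_odd ho hodd)
      rcases hev with ⟨k, hk⟩ | ⟨k, hk⟩
      · refine ⟨((x'.val / 2 : ℕ) : ZMod n), ?_⟩
        have h2 : (2 * (x'.val / 2) : ℕ) = x'.val := by omega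
        calc (2 : ZMod n) * ((x'.val / 2 : ℕ) : ZMod n)
            = ((2 * (x'.val / 2) : ℕ) : ZMod n) := by push_cast; ring
          _ = ((x'.val : ℕ) : ZMod n) := by rw [h2]
          _ = x' := by rw [ZMod.natCast_val, ZMod.cast_id]
      · refine ⟨(((x'.val + n) / 2 : ℕ) : ZMod n), ?_⟩
        have h2 : (2 * ((x'.val + n) / 2) : ℕ) = x'.val + n := by omega
        calc (2 : ZMod n) * (((x'.val + n) / 2 : ℕ) : ZMod n)
            = ((2 * ((x'.val + n) / 2) : ℕ) : ZMod n) := by push_cast; ring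
          _ = ((x'.val + n : ℕ) : ZMod n) := by rw [h2]
          _ = x' := by push_cast [ZMod.natCast_val, ZMod.cast_id, ZMod.natCast_self]; ring
    by_cases hpar : Even x.val ∨ Odd n
    · obtain ⟨y, hy⟩ := hhalf x hpar
      obtain ⟨L, hL, hlen, hsum⟩ := heven y
      exact ⟨L, hL, by omega, by rw [hsum, hy]⟩
    · push_neg at hpar
      obtain ⟨hxodd, hnodd⟩ := hpar
      have hneven : Even n := Nat.not_odd_iff_even.mp hnodd
      -- find an odd element of E
      have hodd : ∃ d0 ∈ E, ¬ Even d0 := by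
        by_contra hall
        push_neg at hall
        have h2g : 2 ∣ E.gcd id := Finset.dvd_gcd fun d hd => (hall d hd).two_dvd
        have h2n : (2 : ℕ) ∣ n := hneven.two_dvd
        have : (2 : ℕ) ∣ 1 := hEgcd ▸ Nat.dvd_gcd h2g h2n
        omega
      obtain ⟨d0, hd0E, hd0odd⟩ := hodd
      have hd0dvd : d0 ∣ n := hDdvd d0 (hED hd0E)
      have hd0lt : d0 < n := hElt d0 hd0E
      have hd0pos : 0 < d0 := by
        rcases Nat.eq_zero_or_pos d0 with h | h
        · exfalso; exact hd0odd (h ▸ Even.zero)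
        · exact h
      have hd0S : d0 ∈ S := by
        refine hGnS d0 hd0E d0 ?_
        simp only [Gn, Finset.mem_filter, Finset.mem_Ioo]
        exact ⟨⟨hd0pos, hd0lt⟩, Nat.gcd_eq_left hd0dvd⟩
      set x' := x - (d0 : ZMod n) with hx'
      have hx'val : Even x'.val := by
        have hle : d0 ≤ x.val + n := le_trans (le_of_lt hd0lt) (by omega)
        have hxk : x' = ((x.val + n - d0 : ℕ) : ZMod n) := by
          rw [Nat.cast_sub hle]
          push_cast [ZMod.natCast_val, ZMod.cast_id, ZMod.natCast_self]
          ring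
        have hkeven : Even (x.val + n - d0) := by
          rcases hneven with ⟨a, ha⟩
          rcases Nat.not_even_iff_odd.mp hxodd with ⟨b, hb⟩
          rcases Nat.not_even_iff_odd.mp hd0odd with ⟨e, he⟩
          exact ⟨b + a - e, by omega⟩
        rw [hxk, ZMod.val_natCast, Nat.even_iff,
          Nat.mod_mod_of_dvd _ hneven.two_dvd]
        rcases hkeven with ⟨a0, ha0⟩
        omega
      obtain ⟨y, hy⟩ := hhalf x' (Or.inl hx'val)
      obtain ⟨L, hL, hlen, hsum⟩ := heven y
      refine ⟨d0 :: L, ?_, by simp [hlen], ?_⟩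
      · intro s hs
        simp only [List.mem_cons] at hs
        rcases hs with rfl | hs
        · exact hd0S
        · exact hL s hs
      · simp only [List.map_cons, List.sum_cons, hsum, hy, hx']
        ring
  -- walks of bounded length between any two vertices
  have hwalk : ∀ u v : ZMod n, ∃ W : G.Walk u v, W.length ≤ 2 * t + 1 := by
    intro u v
    obtain ⟨L, hL, hlen, hsum⟩ := hrep (u - v)
    obtain ⟨W, hW⟩ := walk_of_steps' hG hSlt L hL v
    refine ⟨W.copy (by rw [hsum]; ring) rfl, ?_⟩
    rw [SimpleGraph.Walk.length_copy, hW]; exact hlen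
  have hconn : G.Connected := by
    rw [SimpleGraph.connected_iff]
    exact ⟨fun u v => ⟨(hwalk u v).choose⟩, ⟨0⟩⟩
  have hediam : G.ediam ≤ (2 * t + 1 : ℕ) := by
    refine SimpleGraph.ediam_le_of_edist_le fun u v => ?_
    obtain ⟨W, hW⟩ := hwalk u v
    exact le_trans (SimpleGraph.edist_le W) (by exact_mod_cast Nat.cast_le.mpr hW)
  have hneTop : G.ediam ≠ ⊤ := ne_top_of_le_ne_top (ENat.coe_ne_top _) hediam
  constructor
  · -- lower bound
    obtain ⟨W, hWlen⟩ := (hconn 1 0).exists_walk_length_eq_dist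
    obtain ⟨L, hL, hlen, hsum⟩ := steps_of_walk' hG W
    set E' := (L.map (fun s => Nat.gcd s n)).toFinset with hE'
    have hE'D : E' ⊆ D := by
      intro d hd
      rw [hE', List.mem_toFinset, List.mem_map] at hd
      obtain ⟨s, hsL, rfl⟩ := hd
      exact hSgcd s (hL s hsL)
    have hE'gcd : Nat.gcd (E'.gcd id) n = 1 := by
      refine Nat.dvd_one.mp ?_
      set g := Nat.gcd (E'.gcd id) n with hgdef
      have hgn : g ∣ n := Nat.gcd_dvd_right _ _
      have hgs : ∀ s ∈ L, g ∣ s := by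
        intro s hsL
        have hmem : Nat.gcd s n ∈ E' := by
          rw [hE', List.mem_toFinset, List.mem_map]
          exact ⟨s, hsL, rfl⟩
        have h1 : E'.gcd id ∣ Nat.gcd s n := Finset.gcd_dvd hmem
        exact ((Nat.gcd_dvd_left _ _).trans h1).trans (Nat.gcd_dvd_left s n)
      have hgsum : g ∣ L.sum := List.dvd_sum hgs
      have hcast : ((L.sum : ℕ) : ZMod n) = 1 := by
        rw [Nat.cast_list_sum]
        simpa using hsum.symm
      have hmod : L.sum ≡ 1 [MOD n] := by
        have := (ZMod.natCast_eq_natCast_iff L.sum 1 n).mp (by simpa using hcast)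
        exact this
      have hmodg : L.sum ≡ 1 [MOD g] := hmod.of_dvd hgn
      have : (0 : ℕ) ≡ 1 [MOD g] := ((Nat.modEq_zero_iff_dvd.mpr hgsum).symm.trans hmodg)
      exact Nat.modEq_zero_iff_dvd.mp this.symm
    have ht' := ht.2 ⟨E', hE'D, rfl, hE'gcd⟩
    have hcard : E'.card ≤ L.length := by
      calc E'.card ≤ (L.map (fun s => Nat.gcd s n)).length := List.toFinset_card_le _
        _ = L.length := List.length_map _
    calc t ≤ E'.card := ht'
      _ ≤ L.length := hcard
      _ = W.length := hlen
      _ = G.dist 1 0 := hWlen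
      _ ≤ G.diam := SimpleGraph.dist_le_diam hneTop
  · -- upper bound
    have : G.diam ≤ ((2 * t + 1 : ℕ) : ℕ∞).toNat := ENat.toNat_le_toNat hediam (ENat.coe_ne_top _)
    simpa only [ENat.toNat_coe] using this
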